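/- There is no surjective local homeomorphism from a compact Hausdorff space onto the twisted sphere X: if Z is a compact Hausdorff topological space and f : Z → X is a local homeomorphism, then f is not surjective. -/

import Mathlib

noncomputable section

/-- The 2-sphere, realized as the unit sphere `{(c,z) : |c|² + z² = 1}` in `ℂ × ℝ`,
with the subspace topology. -/
def TwoSphere : Set (ℂ × ℝ) := {p | ‖p.1‖ ^ 2 + p.2 ^ 2 = 1}

/-- The relation `r₀` on `S²`: `r₀ (c,z) (c',z')` iff `z ≠ 0`, `c' = -c` and `z' = z`. -/
def sphRel (a b : TwoSphere) : Prop :=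
  a.1.2 ≠ 0 ∧ b.1.1 = -a.1.1 ∧ b.1.2 = a.1.2

/-- The twisted sphere `X`: the quotient of `S²` by the equivalence relation generated
by `r₀`, with the quotient topology. -/
abbrev TwistedSphere : Type := Quot (Relation.EqvGen sphRel)

/-- The quotient map `q : S² → X`. -/
abbrev sphQ : TwoSphere → TwistedSphere := Quot.mk (Relation.EqvGen sphRel)

namespace Stmt12

open Complex Topology Filter Set Real

/-- clamp to [0,1] -/
def clamp (t : ℝ) : ℝ := max 0 (min 1 t)

lemma clamp_mem (t : ℝ) : clamp t ∈ Icc (0:ℝ) 1 :=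
  ⟨le_max_left _ _, max_le (by norm_num) (min_le_left _ _)⟩

lemma clamp_eq {t : ℝ} (h0 : 0 ≤ t) (h1 : t ≤ 1) : clamp t = t := by
  simp [clamp, min_eq_right h1, max_eq_right h0]

lemma clamp_pos {t : ℝ} (h : 0 < t) : 0 < clamp t :=
  lt_max_of_lt_right (lt_min one_pos h)

lemma clamp_one : clamp 1 = 1 := clamp_eq zero_le_one le_rfl

lemma continuous_clamp : Continuous clamp :=
  continuous_const.max (continuous_const.min continuous_id)

/-- point on the sphere at longitude θ and height (clamped) t -/
def sphPt (θ t : ℝ) : TwoSphere :=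
  ⟨(Complex.exp (θ * Complex.I) * (Real.sqrt (1 - clamp t ^ 2) : ℝ), clamp t), by
    have h := clamp_mem t
    have h2 : (0:ℝ) ≤ 1 - clamp t ^ 2 := by nlinarith [h.1, h.2]
    simp only [TwoSphere, Set.mem_setOf_eq, norm_mul, Complex.norm_exp_ofReal_mul_I,
      Complex.norm_real, Real.norm_eq_abs, one_mul]
    rw [_root_.abs_of_nonneg (Real.sqrt_nonneg _), Real.sq_sqrt h2]
    ring⟩

lemma continuous_sphPt : Continuous fun p : ℝ × ℝ => sphPt p.1 p.2 := by
  apply Continuous.subtype_mk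
  apply Continuous.prodMk
  · exact (Complex.continuous_exp.comp (by continuity)).mul
      (Complex.continuous_ofReal.comp ((continuous_const.sub
        ((continuous_clamp.comp continuous_snd).pow 2)).sqrt))
  · exact continuous_clamp.comp continuous_snd

/-- the meridian family in the twisted sphere -/
def gm (θ t : ℝ) : TwistedSphere := sphQ (sphPt θ t)

lemma continuous_gm : Continuous fun p : ℝ × ℝ => gm p.1 p.2 :=
  (continuous_quot_mk).comp continuous_sphPt

lemma sphPt_coord (θ t : ℝ) :
    (sphPt θ t).1 = (Complex.exp (θ * Complex.I) * (Real.sqrt (1 - clamp t ^ 2) : ℝ), clamp t) :=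
  rfl

lemma continuous_gm1 (θ : ℝ) : Continuous fun t => gm θ t := by
  have h := continuous_gm.comp (show Continuous fun t : ℝ => ((θ, t) : ℝ × ℝ) from
    continuous_const.prodMk continuous_id)
  exact h

lemma continuous_gm2 (t : ℝ) : Continuous fun θ => gm θ t := by
  have h := continuous_gm.comp (show Continuous fun θ : ℝ => ((θ, t) : ℝ × ℝ) from
    continuous_id.prodMk continuous_const)
  exact h

lemma exp_add_pi (θ : ℝ) : Complex.exp ((↑(θ + π)) * Complex.I) = - Complex.exp (θ * Complex.I) := by
  push_cast
  rw [add_mul, Complex.exp_add, Complex.exp_pi_mul_I]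
  ring

lemma gm_pi (θ : ℝ) {t : ℝ} (ht : 0 < t) : gm (θ + π) t = gm θ t := by
  refine Quot.sound (Relation.EqvGen.symm _ _ (Relation.EqvGen.rel _ _ ?_))
  refine ⟨(clamp_pos ht).ne', ?_, rfl⟩
  show (sphPt (θ + π) t).1.1 = - (sphPt θ t).1.1
  simp only [sphPt, exp_add_pi]
  ring

lemma gm_one (θ θ' : ℝ) : gm θ 1 = gm θ' 1 := by
  have : ∀ ψ : ℝ, sphPt ψ 1 = ⟨(0, 1), by simp [TwoSphere]⟩ := by
    intro ψ
    apply Subtype.ext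
    simp [sphPt, clamp_one, Prod.ext_iff]
  rw [gm, gm, this θ, this θ']

lemma sphPt_zero (θ : ℝ) : (sphPt θ 0).1 = (Complex.exp (θ * Complex.I), 0) := by
  simp [sphPt, clamp_eq le_rfl zero_le_one, Prod.ext_iff]

/-- height function on the twisted sphere -/
def zX : TwistedSphere → ℝ :=
  Quot.lift (fun a => a.1.2) (by
    intro a b h
    induction h with
    | rel a b h => exact h.2.2.symm
    | refl => rfl
    | symm a b _ ih => exact ih.symm
    | trans a b c _ _ ih1 ih2 => exact ih1.trans ih2)

/-- squared horizontal coordinate on the twisted sphere -/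
def cX2 : TwistedSphere → ℂ :=
  Quot.lift (fun a => a.1.1 ^ 2) (by
    intro a b h
    induction h with
    | rel a b h =>
      show a.1.1 ^ 2 = b.1.1 ^ 2
      rw [h.2.1]; ring
    | refl => rfl
    | symm a b _ ih => exact ih.symm
    | trans a b c _ _ ih1 ih2 => exact ih1.trans ih2)

def Phi : TwistedSphere → ℂ × ℝ := fun x => (cX2 x, zX x)

lemma continuous_zX : Continuous zX :=
  continuous_quot_lift _ (continuous_subtype_val.snd)

lemma continuous_cX2 : Continuous cX2 :=
  continuous_quot_lift _ ((continuous_subtype_val.fst).pow 2)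

lemma continuous_Phi : Continuous Phi := continuous_cX2.prodMk continuous_zX

lemma zX_gm (θ t : ℝ) : zX (gm θ t) = clamp t := rfl

lemma Phi_mk (a : TwoSphere) : Phi (sphQ a) = (a.1.1 ^ 2, a.1.2) := rfl

/-- Points with nonzero height are determined by Phi. -/
lemma phi_inj {x y : TwistedSphere} (hx : zX x ≠ 0) (h : Phi x = Phi y) : x = y := by
  induction x using Quot.ind with | _ a =>
  induction y using Quot.ind with | _ b =>
  rw [Phi_mk, Phi_mk, Prod.mk.injEq] at h
  obtain ⟨hc, hz⟩ := h
  have hz' : a.1.2 = b.1.2 := hz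
  have : (b.1.1 - a.1.1) * (b.1.1 + a.1.1) = 0 := by linear_combination -hc
  rcases mul_eq_zero.mp this with h' | h'
  · have : a = b := Subtype.ext (Prod.ext (by linear_combination -h') hz')
    rw [this]
  · exact Quot.sound (Relation.EqvGen.rel _ _ ⟨hx, by linear_combination h', hz'.symm⟩)

/-- characterization of the equivalence classes -/
private def Rc (a b : TwoSphere) : Prop :=
  a = b ∨ (a.1.2 ≠ 0 ∧ b.1.1 = -a.1.1 ∧ b.1.2 = a.1.2)

private lemma Rc_symm {a b : TwoSphere} (h : Rc a b) : Rc b a := by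
  rcases h with h | ⟨h1, h2, h3⟩
  · exact Or.inl h.symm
  · exact Or.inr ⟨h3 ▸ h1, by rw [h2]; ring, h3.symm⟩

private lemma Rc_trans {a b c : TwoSphere} (h : Rc a b) (h' : Rc b c) : Rc a c := by
  rcases h with h | ⟨h1, h2, h3⟩
  · rwa [h]
  · rcases h' with h' | ⟨h1', h2', h3'⟩
    · rw [← h']; exact Or.inr ⟨h1, h2, h3⟩
    · left
      apply Subtype.ext
      apply Prod.ext
      · rw [h2', h2]; ring
      · rw [h3', h3]

private lemma eqvGen_to_Rc {a b : TwoSphere} (h : Relation.EqvGen sphRel a b) : Rc a b := by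
  induction h with
  | rel a b h => exact Or.inr h
  | refl => exact Or.inl rfl
  | symm a b _ ih => exact Rc_symm ih
  | trans a b c _ _ ih1 ih2 => exact Rc_trans ih1 ih2

lemma sphQ_eq_iff {a b : TwoSphere} (h : sphQ a = sphQ b) : Rc a b := by
  have h2 := Quot.eqvGen_exact h
  clear h
  induction h2 with
  | rel a b h => exact eqvGen_to_Rc h
  | refl => exact Or.inl rfl
  | symm a b _ ih => exact Rc_symm ih
  | trans a b c _ _ ih1 ih2 => exact Rc_trans ih1 ih2

/-- the equator embeds injectively -/
lemma equator_exp_inj {φ φ' : ℝ} (h : gm φ 0 = gm φ' 0) :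
    Complex.exp (φ * Complex.I) = Complex.exp (φ' * Complex.I) := by
  have := sphQ_eq_iff h
  rcases this with h' | ⟨h1, _, _⟩
  · have := congrArg (fun a : TwoSphere => a.1.1) h'
    simpa [sphPt_zero] using this
  · exact absurd (show (sphPt φ 0).1.2 = 0 by rw [sphPt_zero]) h1


section Lifts

variable {Z : Type*} [TopologicalSpace Z] [CompactSpace Z] [T2Space Z]
  {f : Z → TwistedSphere}

/-- gluing two continuous functions on adjacent intervals -/
lemma glueCont {a b c : ℝ} {ν μ : ℝ → Z} (hab : a ≤ b) (hbc : b ≤ c)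
    (hν : ContinuousOn ν (Icc a b)) (hμ : ContinuousOn μ (Icc b c)) (hagree : ν b = μ b) :
    ContinuousOn (fun t => if t ≤ b then ν t else μ t) (Icc a c) := by
  intro t ht
  rcases lt_trichotomy t b with h | h | h
  · have h1 : ContinuousWithinAt ν (Icc a c) t := by
      refine (hν t ⟨ht.1, h.le⟩).mono_of_mem_nhdsWithin ?_
      refine mem_nhdsWithin.mpr ⟨Iio b, isOpen_Iio, h, ?_⟩
      rintro x ⟨hx1, hx2⟩
      exact ⟨hx2.1, hx1.le⟩
    refine h1.congr_of_eventuallyEq ?_ (if_pos h.le)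
    filter_upwards [eventually_nhdsWithin_of_eventually_nhds (eventually_lt_nhds h)] with x hx
    · rw [if_pos hx.le]
  · have h1 : ContinuousWithinAt (fun t => if t ≤ b then ν t else μ t) (Icc a b) b := by
      refine (hν b ⟨hab, le_rfl⟩).congr (fun y hy => if_pos hy.2) (if_pos le_rfl)
    have h2 : ContinuousWithinAt (fun t => if t ≤ b then ν t else μ t) (Icc b c) b := by
      refine (hμ b ⟨le_rfl, hbc⟩).congr (fun y hy => ?_) (by rw [if_pos le_rfl]; exact hagree)
      by_cases hyb : y ≤ b
      · rw [if_pos hyb]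
        have : y = b := le_antisymm hyb hy.1
        rw [this, hagree]
      · rw [if_neg hyb]
    have key := (h1.union h2).mono Icc_subset_Icc_union_Icc
    rw [h]
    exact key
  · have h1 : ContinuousWithinAt μ (Icc a c) t := by
      refine (hμ t ⟨h.le, ht.2⟩).mono_of_mem_nhdsWithin ?_
      refine mem_nhdsWithin.mpr ⟨Ioi b, isOpen_Ioi, h, ?_⟩
      rintro x ⟨hx1, hx2⟩
      exact ⟨hx1.le, hx2.2⟩
    refine h1.congr_of_eventuallyEq ?_ (if_neg (not_le.mpr h))
    filter_upwards [eventually_nhdsWithin_of_eventually_nhds (eventually_gt_nhds h)] with x hx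
    · rw [if_neg (not_le.mpr hx)]

/-- uniqueness of lifts through a local homeomorphism to a Hausdorff domain -/
lemma lift_unique (hf : IsLocalHomeomorph f) {s : Set ℝ} (hs : IsPreconnected s)
    {μ ν : ℝ → Z} (hμc : ContinuousOn μ s) (hνc : ContinuousOn ν s)
    (hcomp : ∀ t ∈ s, f (μ t) = f (ν t)) {t₀ : ℝ} (ht₀ : t₀ ∈ s) (h : μ t₀ = ν t₀) :
    EqOn μ ν s :=
  (T2Space.isSeparatedMap f).eqOn_of_comp_eqOn hf.isLocallyInjective hs hμc hνc
    (fun t ht => hcomp t ht) ht₀ h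

/-- a cluster value of a lift lies over a point with the same Phi-invariant -/
lemma cluster_phi {l : Filter ℝ} [l.NeBot] {u : ℝ → Z} {p : Z} (hp : MapClusterPt p l u)
    (hfc : Continuous f)
    {x : TwistedSphere} (hx : Tendsto (fun t => Stmt12.Phi (f (u t))) l (𝓝 (Stmt12.Phi x))) :
    Stmt12.Phi (f p) = Stmt12.Phi x := by
  have h1 : MapClusterPt ((Stmt12.Phi ∘ f) p) l ((Stmt12.Phi ∘ f) ∘ u) :=
    MapClusterPt.continuousAt_comp ((Stmt12.continuous_Phi.comp hfc).continuousAt) hp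
  have h2 : ClusterPt (Stmt12.Phi (f p)) (𝓝 (Stmt12.Phi x)) := h1.clusterPt.mono hx
  exact t2_iff_nhds.mp inferInstance h2


/-- Existence of lifts of the meridian paths, downward from the pole. -/
lemma exists_lift (hf : IsLocalHomeomorph f) {yhat : Z} (hy : f yhat = gm 0 1) (θ : ℝ) :
    ∃ μ : ℝ → Z, ContinuousOn μ (Ioc 0 1) ∧ μ 1 = yhat ∧ ∀ t ∈ Ioc 0 1, f (μ t) = gm θ t := by
  classical
  set T : Set ℝ := {r | r ∈ Ioc (0:ℝ) 1 ∧
    ∃ μ : ℝ → Z, ContinuousOn μ (Icc r 1) ∧ μ 1 = yhat ∧ ∀ t ∈ Icc r 1, f (μ t) = gm θ t}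
    with hT
  have hmem1 : (1:ℝ) ∈ T := by
    refine ⟨⟨one_pos, le_rfl⟩, fun _ => yhat, continuousOn_const, rfl, ?_⟩
    intro t ht
    have : t = 1 := le_antisymm ht.2 ht.1
    rw [this, hy]; exact gm_one 0 θ
  have hTmono : ∀ r ∈ T, ∀ r', r' ∈ Ioc (0:ℝ) 1 → r ≤ r' → r' ∈ T := by
    rintro r ⟨hr, μ, hc, h1, hfμ⟩ r' hr' hle
    exact ⟨hr', μ, hc.mono (Icc_subset_Icc_left hle), h1,
      fun t ht => hfμ t ⟨hle.trans ht.1, ht.2⟩⟩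
  choose L hLc hL1 hLf using fun r (hr : r ∈ T) => hr.2
  have hagree : ∀ (r : ℝ) (hr : r ∈ T) (r' : ℝ) (hr' : r' ∈ T) (t : ℝ),
      r ≤ t → r' ≤ t → t ≤ 1 → L r hr t = L r' hr' t := by
    intro r hr r' hr' t htr htr' ht1
    have hsub : Icc (max r r') 1 ⊆ Icc r 1 := Icc_subset_Icc_left (le_max_left _ _)
    have hsub' : Icc (max r r') 1 ⊆ Icc r' 1 := Icc_subset_Icc_left (le_max_right _ _)
    have h1m : (1:ℝ) ∈ Icc (max r r') 1 := ⟨max_le hr.1.2 hr'.1.2, le_rfl⟩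
    have := lift_unique hf isPreconnected_Icc ((hLc r hr).mono hsub) ((hLc r' hr').mono hsub')
      (fun u hu => by rw [hLf r hr u (hsub hu), hLf r' hr' u (hsub' hu)]) h1m
      (by rw [hL1 r hr, hL1 r' hr'])
    exact this ⟨max_le htr htr', ht1⟩
  set G : ℝ → Z := fun t =>
      if h : ∃ r, r ∈ T ∧ r ≤ t ∧ t ≤ 1 then L h.choose h.choose_spec.1 t else yhat
    with hG
  have hGeq : ∀ (r : ℝ) (hr : r ∈ T) (t : ℝ), r ≤ t → t ≤ 1 → G t = L r hr t := by
    intro r hr t htr ht1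
    have hex : ∃ r', r' ∈ T ∧ r' ≤ t ∧ t ≤ 1 := ⟨r, hr, htr, ht1⟩
    rw [hG]
    simp only [dif_pos hex]
    exact hagree _ hex.choose_spec.1 r hr t hex.choose_spec.2.1 htr ht1
  have hGicc : ∀ r ∈ T, ContinuousOn G (Icc r 1) ∧ (∀ t ∈ Icc r 1, f (G t) = gm θ t) := by
    intro r hr
    constructor
    · exact (hLc r hr).congr (fun t ht => hGeq r hr t ht.1 ht.2)
    · intro t ht
      rw [hGeq r hr t ht.1 ht.2]
      exact hLf r hr t ht
  have hG1 : G 1 = yhat := by rw [hGeq 1 hmem1 1 le_rfl le_rfl, hL1 1 hmem1]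
  have hTne : T.Nonempty := ⟨1, hmem1⟩
  have hTbdd : BddBelow T := ⟨0, fun r hr => hr.1.1.le⟩
  set τ := sInf T with hτdef
  have hτle1 : τ ≤ 1 := csInf_le hTbdd hmem1
  -- main claim : every point of Ioc 0 1 is in T
  have hTall : ∀ s ∈ Ioc (0:ℝ) 1, s ∈ T := by
    intro s hs
    by_cases hcase : τ < s
    · obtain ⟨r, hrT, hrs⟩ := exists_lt_of_csInf_lt hTne hcase
      exact hTmono r hrT s hs hrs.le
    · have hsτ : s ≤ τ := not_lt.mp hcase
      have hτpos : 0 < τ := lt_of_lt_of_le hs.1 hsτ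
      -- STEP A : τ ∈ T
      have hτT : τ ∈ T := by
        rcases eq_or_lt_of_le hτle1 with heq | hlt
        · rw [heq]; exact hmem1
        · have hGIoc : ContinuousOn G (Ioc τ 1) := by
            intro t ht
            obtain ⟨r, hrT, hrt⟩ := exists_lt_of_csInf_lt hTne ht.1
            have h1 : ContinuousWithinAt G (Icc r 1) t := (hGicc r hrT).1 t ⟨hrt.le, ht.2⟩
            refine h1.mono_of_mem_nhdsWithin ?_
            refine mem_nhdsWithin.mpr ⟨Ioi r, isOpen_Ioi, hrt, ?_⟩
            rintro x ⟨hx1, hx2⟩; exact ⟨hx1.le, hx2.2⟩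
          have hfG : ∀ t ∈ Ioc τ 1, f (G t) = gm θ t := by
            intro t ht
            obtain ⟨r, hrT, hrt⟩ := exists_lt_of_csInf_lt hTne ht.1
            exact (hGicc r hrT).2 t ⟨hrt.le, ht.2⟩
          obtain ⟨p, -, hp⟩ := isCompact_univ.exists_mapClusterPt
            (f := 𝓝[>] τ) (u := G) (by simp)
          have hIoc_mem : Ioc τ 1 ∈ 𝓝[>] τ := Ioc_mem_nhdsGT_of_mem ⟨le_rfl, hlt⟩
          have htendphi : Tendsto (fun t => Phi (f (G t))) (𝓝[>] τ) (𝓝 (Phi (gm θ τ))) := by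
            have h2 : Tendsto (fun t => Phi (gm θ t)) (𝓝[>] τ) (𝓝 (Phi (gm θ τ))) :=
              ((continuous_Phi.comp (continuous_gm1 θ)).tendsto τ).mono_left nhdsWithin_le_nhds
            refine h2.congr' ?_
            filter_upwards [hIoc_mem] with t ht
            rw [hfG t ht]
          have hphi : Phi (f p) = Phi (gm θ τ) := cluster_phi hp hf.continuous htendphi
          have hfp : f p = gm θ τ := by
            have hzz : zX (f p) = clamp τ := congrArg Prod.snd hphi
            exact phi_inj (by rw [hzz]; exact (clamp_pos hτpos).ne') hphi
          obtain ⟨e, hpe, hfe⟩ := hf p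
          have hfpt : gm θ τ ∈ e.target := by
            rw [← hfp, hfe]; exact e.map_source hpe
          have hwin : {t : ℝ | gm θ t ∈ e.target} ∈ 𝓝 τ :=
            (continuous_gm1 θ).continuousAt.preimage_mem_nhds (e.open_target.mem_nhds hfpt)
          obtain ⟨δ, hδpos, hball⟩ := Metric.mem_nhds_iff.mp hwin
          have hfreq : ∃ᶠ t in 𝓝[>] τ, G t ∈ e.source :=
            mapClusterPt_iff_frequently.mp hp e.source (e.open_source.mem_nhds hpe)
          have hminpos : τ < min (τ + δ) 1 := lt_min (by linarith) hlt
          have hev : ∀ᶠ t in 𝓝[>] τ, t ∈ Ioo τ (min (τ + δ) 1) :=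
            Ioo_mem_nhdsGT_of_mem ⟨le_rfl, hminpos⟩
          obtain ⟨t₀, ht₀src, ht₀mem⟩ := (hfreq.and_eventually hev).exists
          have ht₀lt1 : t₀ < 1 := ht₀mem.2.trans_le (min_le_right _ _)
          have ht₀ltδ : t₀ < τ + δ := ht₀mem.2.trans_le (min_le_left _ _)
          have ht₀Ioc : t₀ ∈ Ioc τ 1 := ⟨ht₀mem.1, ht₀lt1.le⟩
          set ν : ℝ → Z := fun t => e.symm (gm θ t) with hν
          have hmapsto : ∀ t ∈ Icc τ t₀, gm θ t ∈ e.target := by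
            intro t ht
            apply hball
            rw [Real.ball_eq_Ioo]
            exact ⟨by linarith [ht.1], by linarith [ht.2]⟩
          have hνc : ContinuousOn ν (Icc τ t₀) :=
            e.continuousOn_symm.comp ((continuous_gm1 θ).continuousOn) hmapsto
          have hfν : ∀ t ∈ Icc τ t₀, f (ν t) = gm θ t := by
            intro t ht
            rw [hν]
            simp only
            rw [hfe]
            exact e.right_inv (hmapsto t ht)
          have hagr : ν t₀ = G t₀ := by
            have h3 : gm θ t₀ = f (G t₀) := (hfG t₀ ht₀Ioc).symm
            rw [hν]
            simp only
            rw [h3, hfe]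
            exact e.left_inv ht₀src
          set lam : ℝ → Z := fun t => if t ≤ t₀ then ν t else G t with hlam
          have hGc' : ContinuousOn G (Icc t₀ 1) := by
            obtain ⟨r, hrT, hrt⟩ := exists_lt_of_csInf_lt hTne ht₀mem.1
            exact ((hGicc r hrT).1).mono (Icc_subset_Icc_left hrt.le)
          have hlamc : ContinuousOn lam (Icc τ 1) :=
            glueCont ht₀Ioc.1.le ht₀Ioc.2 hνc hGc' hagr
          refine ⟨⟨hτpos, hτle1⟩, lam, hlamc, ?_, ?_⟩
          · show (if (1:ℝ) ≤ t₀ then ν 1 else G 1) = yhat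
            rw [if_neg (not_le.mpr ht₀lt1), hG1]
          · intro t ht
            by_cases h' : t ≤ t₀
            · show f (if t ≤ t₀ then ν t else G t) = gm θ t
              rw [if_pos h']
              exact hfν t ⟨ht.1, h'⟩
            · show f (if t ≤ t₀ then ν t else G t) = gm θ t
              rw [if_neg h']
              exact hfG t ⟨ht₀Ioc.1.trans (not_le.mp h'), ht.2⟩
      -- STEP B : extend below τ
      have hτIoc := hτT.1
      have hGτc := (hGicc τ hτT).1
      have hfτ : f (G τ) = gm θ τ := (hGicc τ hτT).2 τ ⟨le_rfl, hτle1⟩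
      obtain ⟨e, hpe, hfe⟩ := hf (G τ)
      have hfpt : gm θ τ ∈ e.target := by
        rw [← hfτ, hfe]; exact e.map_source hpe
      have hwin : {t : ℝ | gm θ t ∈ e.target} ∈ 𝓝 τ :=
        (continuous_gm1 θ).continuousAt.preimage_mem_nhds (e.open_target.mem_nhds hfpt)
      obtain ⟨δ, hδpos, hball⟩ := Metric.mem_nhds_iff.mp hwin
      set a := max s (τ - δ/2) with ha
      have haτ : a ≤ τ := max_le hsτ (by linarith)
      have hapos : 0 < a := lt_of_lt_of_le hs.1 (le_max_left _ _)
      have hmapsto : ∀ t ∈ Icc a τ, gm θ t ∈ e.target := by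
        intro t ht
        apply hball
        rw [Real.ball_eq_Ioo]
        constructor
        · have : τ - δ/2 ≤ a := le_max_right _ _
          have := ht.1
          linarith
        · linarith [ht.2]
      set ν : ℝ → Z := fun t => e.symm (gm θ t) with hν
      have hνc : ContinuousOn ν (Icc a τ) :=
        e.continuousOn_symm.comp ((continuous_gm1 θ).continuousOn) hmapsto
      have hfν : ∀ t ∈ Icc a τ, f (ν t) = gm θ t := by
        intro t ht
        rw [hν]
        simp only
        rw [hfe]
        exact e.right_inv (hmapsto t ht)
      have hagr : ν τ = G τ := by
        rw [hν]
        simp only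
        rw [← hfτ, hfe]
        exact e.left_inv hpe
      set lam : ℝ → Z := fun t => if t ≤ τ then ν t else G t with hlam
      have hlamc : ContinuousOn lam (Icc a 1) :=
        glueCont haτ hτle1 hνc hGτc hagr
      have haT : a ∈ T := by
        refine ⟨⟨hapos, haτ.trans hτle1⟩, lam, hlamc, ?_, ?_⟩
        · show (if (1:ℝ) ≤ τ then ν 1 else G 1) = yhat
          by_cases h1τ : (1:ℝ) ≤ τ
          · have hτ1 : τ = 1 := le_antisymm hτle1 h1τ
            rw [if_pos h1τ]
            rw [← hτ1, hagr, hτ1, hG1]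
          · rw [if_neg h1τ, hG1]
        · intro t ht
          by_cases h' : t ≤ τ
          · show f (if t ≤ τ then ν t else G t) = gm θ t
            rw [if_pos h']
            exact hfν t ⟨ht.1, h'⟩
          · show f (if t ≤ τ then ν t else G t) = gm θ t
            rw [if_neg h']
            exact (hGicc τ hτT).2 t ⟨(not_le.mp h').le, ht.2⟩
      have hτlea : τ ≤ a := csInf_le hTbdd haT
      rcases max_cases s (τ - δ/2) with ⟨h1, -⟩ | ⟨h1, h2⟩
      · rw [← ha] at h1
        rw [← h1]
        exact haT
      · exfalso
        rw [← ha] at h1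
        rw [h1] at hτlea
        linarith
  -- final assembly
  have hGIoc : ContinuousOn G (Ioc 0 1) := by
    intro t ht
    have h2 : t/2 ∈ T := hTall (t/2) ⟨by linarith [ht.1], by linarith [ht.1, ht.2]⟩
    have h1 : ContinuousWithinAt G (Icc (t/2) 1) t := (hGicc _ h2).1 t ⟨by linarith [ht.1], ht.2⟩
    refine h1.mono_of_mem_nhdsWithin ?_
    refine mem_nhdsWithin.mpr ⟨Ioi (t/2), isOpen_Ioi, (by simp; linarith [ht.1] : t ∈ Ioi (t/2)), ?_⟩
    rintro x ⟨hx1, hx2⟩; exact ⟨hx1.le, hx2.2⟩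
  refine ⟨G, hGIoc, hG1, ?_⟩
  intro t ht
  exact (hGicc t (hTall t ht)).2 t ⟨le_rfl, ht.2⟩


/-- Any meridian lift converges, as t → 0⁺, into a chart around a point lying over one of the
two equator points `gm θ 0`, `gm (θ+π) 0`. -/
lemma lim_structure (hf : IsLocalHomeomorph f) (θ : ℝ) {μ : ℝ → Z}
    (hμc : ContinuousOn μ (Ioc 0 1)) (hμf : ∀ t ∈ Ioc 0 1, f (μ t) = gm θ t) :
    ∃ ψ : ℝ, (ψ = θ ∨ ψ = θ + π) ∧ ∃ (e : OpenPartialHomeomorph Z TwistedSphere) (t₁ : ℝ),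
      f = ⇑e ∧ 0 < t₁ ∧ t₁ ≤ 1 ∧ (∀ t ∈ Icc (0:ℝ) t₁, gm ψ t ∈ e.target) ∧
      (∀ t ∈ Ioc (0:ℝ) t₁, μ t = e.symm (gm ψ t)) := by
  obtain ⟨p, -, hp⟩ := isCompact_univ.exists_mapClusterPt
    (f := 𝓝[>] (0:ℝ)) (u := μ) (by simp)
  have hIoc_mem : Ioc (0:ℝ) 1 ∈ 𝓝[>] (0:ℝ) := Ioc_mem_nhdsGT_of_mem ⟨le_rfl, one_pos⟩
  have htendphi : Tendsto (fun t => Phi (f (μ t))) (𝓝[>] (0:ℝ)) (𝓝 (Phi (gm θ 0))) := by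
    have h2 : Tendsto (fun t => Phi (gm θ t)) (𝓝[>] (0:ℝ)) (𝓝 (Phi (gm θ 0))) :=
      ((continuous_Phi.comp (continuous_gm1 θ)).tendsto 0).mono_left nhdsWithin_le_nhds
    refine h2.congr' ?_
    filter_upwards [hIoc_mem] with t ht
    rw [hμf t ht]
  have hphi : Phi (f p) = Phi (gm θ 0) := cluster_phi hp hf.continuous htendphi
  obtain ⟨a, hap⟩ := Quot.exists_rep (f p)
  have hPa : Phi (sphQ a) = Phi (gm θ 0) := by
    rw [show sphQ a = f p from hap, hphi]
  rw [Phi_mk, show gm θ 0 = sphQ (sphPt θ 0) from rfl, Phi_mk, Prod.mk.injEq] at hPa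
  obtain ⟨hc, hz⟩ := hPa
  rw [show (sphPt θ 0).1.1 = Complex.exp (θ * Complex.I) from congrArg Prod.fst (sphPt_zero θ)]
    at hc
  rw [show (sphPt θ 0).1.2 = 0 from congrArg Prod.snd (sphPt_zero θ)] at hz
  have hcases : a.1.1 = Complex.exp (θ * Complex.I) ∨ a.1.1 = -Complex.exp (θ * Complex.I) := by
    have h4 : (a.1.1 - Complex.exp (θ * Complex.I)) * (a.1.1 + Complex.exp (θ * Complex.I)) = 0 :=
      by linear_combination hc
    rcases mul_eq_zero.mp h4 with h' | h'
    · exact Or.inl (sub_eq_zero.mp h')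
    · exact Or.inr (eq_neg_of_add_eq_zero_left h')
  have key : ∃ ψ : ℝ, (ψ = θ ∨ ψ = θ + π) ∧ f p = gm ψ 0 := by
    rcases hcases with h' | h'
    · refine ⟨θ, Or.inl rfl, ?_⟩
      rw [← hap]
      show sphQ a = sphQ (sphPt θ 0)
      congr 1
      exact Subtype.ext (Prod.ext (by rw [h', congrArg Prod.fst (sphPt_zero θ)])
        (by rw [hz, congrArg Prod.snd (sphPt_zero θ)]))
    · refine ⟨θ + π, Or.inr rfl, ?_⟩
      rw [← hap]
      show sphQ a = sphQ (sphPt (θ + π) 0)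
      congr 1
      refine Subtype.ext (Prod.ext ?_ ?_)
      · rw [congrArg Prod.fst (sphPt_zero (θ + π)), exp_add_pi, h']
      · rw [hz, congrArg Prod.snd (sphPt_zero (θ + π))]
  obtain ⟨ψ, hψor, hfp⟩ := key
  obtain ⟨e, hpe, hfe⟩ := hf p
  have hfpt : gm ψ 0 ∈ e.target := by
    rw [← hfp, hfe]; exact e.map_source hpe
  have hwin : {t : ℝ | gm ψ t ∈ e.target} ∈ 𝓝 (0:ℝ) :=
    (continuous_gm1 ψ).continuousAt.preimage_mem_nhds (e.open_target.mem_nhds hfpt)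
  obtain ⟨δ, hδpos, hball⟩ := Metric.mem_nhds_iff.mp hwin
  have hfreq : ∃ᶠ t in 𝓝[>] (0:ℝ), μ t ∈ e.source :=
    mapClusterPt_iff_frequently.mp hp e.source (e.open_source.mem_nhds hpe)
  have hminpos : (0:ℝ) < min δ 1 := lt_min hδpos one_pos
  have hev : ∀ᶠ t in 𝓝[>] (0:ℝ), t ∈ Ioo 0 (min δ 1) :=
    Ioo_mem_nhdsGT_of_mem ⟨le_rfl, hminpos⟩
  obtain ⟨t₁, ht₁src, ht₁mem⟩ := (hfreq.and_eventually hev).exists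
  have ht₁pos : 0 < t₁ := ht₁mem.1
  have ht₁le1 : t₁ ≤ 1 := (ht₁mem.2.trans_le (min_le_right _ _)).le
  have ht₁ltδ : t₁ < δ := ht₁mem.2.trans_le (min_le_left _ _)
  have hwina : ∀ t ∈ Icc (0:ℝ) t₁, gm ψ t ∈ e.target := by
    intro t ht
    apply hball
    rw [Real.ball_eq_Ioo]
    exact ⟨by linarith [ht.1], by linarith [ht.2]⟩
  set ν : ℝ → Z := fun t => e.symm (gm ψ t) with hν
  have hgmeq : ∀ t : ℝ, 0 < t → gm ψ t = gm θ t := by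
    intro t ht
    rcases hψor with h' | h'
    · rw [h']
    · rw [h']; exact gm_pi θ ht
  have hμc' : ContinuousOn μ (Ioc 0 t₁) := hμc.mono (Ioc_subset_Ioc_right ht₁le1)
  have hνc : ContinuousOn ν (Ioc 0 t₁) :=
    e.continuousOn_symm.comp ((continuous_gm1 ψ).continuousOn)
      (fun t ht => hwina t ⟨ht.1.le, ht.2⟩)
  have hcomp : ∀ t ∈ Ioc (0:ℝ) t₁, f (μ t) = f (ν t) := by
    intro t ht
    rw [hμf t ⟨ht.1, ht.2.trans ht₁le1⟩, hν]
    simp only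
    rw [hfe, e.right_inv (hwina t ⟨ht.1.le, ht.2⟩), hgmeq t ht.1]
  have hagr : μ t₁ = ν t₁ := by
    rw [hν]
    simp only
    rw [hgmeq t₁ ht₁pos, ← hμf t₁ ⟨ht₁pos, ht₁le1⟩, hfe]
    exact (e.left_inv ht₁src).symm
  have heqon : EqOn μ ν (Ioc 0 t₁) :=
    lift_unique hf isPreconnected_Ioc hμc' hνc hcomp ⟨ht₁pos, le_rfl⟩ hagr
  exact ⟨ψ, hψor, e, t₁, hfe, ht₁pos, ht₁le1, hwina, fun t ht => heqon ht⟩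


/-- Continuity of the meridian lifts in the parameter θ. -/
lemma cont_param (hf : IsLocalHomeomorph f) {yhat : Z} {μ : ℝ → ℝ → Z}
    (hμc : ∀ θ, ContinuousOn (μ θ) (Ioc 0 1)) (hμ1 : ∀ θ, μ θ 1 = yhat)
    (hμf : ∀ θ, ∀ t ∈ Ioc (0:ℝ) 1, f (μ θ t) = gm θ t)
    (θ₀ : ℝ) {t₀ : ℝ} (ht₀ : t₀ ∈ Ioc (0:ℝ) 1) :
    Tendsto (fun θ => μ θ t₀) (𝓝 θ₀) (𝓝 (μ θ₀ t₀)) := by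
  set S := {r : ℝ | r ∈ Icc t₀ 1 ∧
      ∀ t ∈ Icc r 1, Tendsto (fun θ => μ θ t) (𝓝 θ₀) (𝓝 (μ θ₀ t))} with hSdef
  have h1S : (1:ℝ) ∈ S := by
    refine ⟨⟨ht₀.2, le_rfl⟩, ?_⟩
    intro t ht
    have : t = 1 := le_antisymm ht.2 ht.1
    rw [this]
    simp only [hμ1]
    exact tendsto_const_nhds
  have hSne : S.Nonempty := ⟨1, h1S⟩
  have hSbdd : BddBelow S := ⟨t₀, fun r hr => hr.1.1⟩
  set τ := sInf S with hτdef
  have hτmem : τ ∈ Icc t₀ 1 := ⟨le_csInf hSne (fun r hr => hr.1.1), csInf_le hSbdd h1S⟩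
  have hτIoc : τ ∈ Ioc (0:ℝ) 1 := ⟨lt_of_lt_of_le ht₀.1 hτmem.1, hτmem.2⟩
  obtain ⟨e, hpe, hfe⟩ := hf (μ θ₀ τ)
  have hfτ : f (μ θ₀ τ) = gm θ₀ τ := hμf θ₀ τ hτIoc
  have hfpt : gm θ₀ τ ∈ e.target := by
    rw [← hfτ, hfe]; exact e.map_source hpe
  -- first window in t for θ₀
  obtain ⟨δ₁, hδ₁pos, hball₁⟩ := Metric.mem_nhds_iff.mp
    ((continuous_gm1 θ₀).continuousAt.preimage_mem_nhds (e.open_target.mem_nhds hfpt))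
  -- tube lemma
  have hW : IsOpen {q : ℝ × ℝ | gm q.1 q.2 ∈ e.target} := e.open_target.preimage continuous_gm
  set K := Icc (τ - δ₁/2) (τ + δ₁/2) with hK
  have hKW : ({θ₀} ×ˢ K) ⊆ {q : ℝ × ℝ | gm q.1 q.2 ∈ e.target} := by
    rintro ⟨θ, t⟩ ⟨hθ, ht⟩
    rw [mem_singleton_iff] at hθ
    subst hθ
    apply hball₁
    rw [Real.ball_eq_Ioo]
    exact ⟨by rcases ht with ⟨h1, h2⟩; linarith, by rcases ht with ⟨h1, h2⟩; linarith⟩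
  obtain ⟨U, V, hUopen, hVopen, hθ₀U, hKV, hUV⟩ :=
    generalized_tube_lemma isCompact_singleton isCompact_Icc hW hKW
  obtain ⟨η, hηpos, hηU⟩ := Metric.mem_nhds_iff.mp (hUopen.mem_nhds (hθ₀U rfl))
  -- window for membership in the source along θ₀
  have hsrc : (fun t => μ θ₀ t) ⁻¹' e.source ∈ 𝓝[Ioc 0 1] τ :=
    mem_map.mp ((hμc θ₀ τ hτIoc) (e.open_source.mem_nhds hpe))
  obtain ⟨Uo, hUoopen, hτUo, hUosub⟩ := mem_nhdsWithin.mp hsrc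
  obtain ⟨δ₂, hδ₂pos, hball₂⟩ := Metric.mem_nhds_iff.mp (hUoopen.mem_nhds hτUo)
  set δ' := min (δ₁/4) (δ₂/2) with hδ'
  have hδ'pos : 0 < δ' := lt_min (by linarith) (by linarith)
  have hδ'le₁ : δ' ≤ δ₁/4 := min_le_left _ _
  have hδ'le₂ : δ' ≤ δ₂/2 := min_le_right _ _
  -- pick T₁ ∈ S close to τ from above
  have hT₁ex : ∃ T₁ ∈ S, τ ≤ T₁ ∧ T₁ ≤ τ + δ' := by
    rcases eq_or_lt_of_le hτmem.2 with heq | hlt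
    · exact ⟨1, h1S, heq.le, by rw [← heq]; linarith⟩
    · have hlt2 : τ < min (τ + δ') 1 := lt_min (by linarith) hlt
      obtain ⟨T₁, hT₁S, hT₁lt⟩ := exists_lt_of_csInf_lt hSne hlt2
      exact ⟨T₁, hT₁S, csInf_le hSbdd hT₁S, (hT₁lt.trans_le (min_le_left _ _)).le⟩
  obtain ⟨T₁, hT₁S, hτT₁, hT₁le⟩ := hT₁ex
  have hT₁Ioc : T₁ ∈ Ioc (0:ℝ) 1 := ⟨lt_of_lt_of_le hτIoc.1 hτT₁, hT₁S.1.2⟩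
  set A := max t₀ (τ - δ') with hA
  have hAτ : A ≤ τ := max_le hτmem.1 (by linarith)
  have hApos : 0 < A := lt_of_lt_of_le ht₀.1 (le_max_left _ _)
  have hAT₁ : A ≤ T₁ := hAτ.trans hτT₁
  have hsubK : Icc A T₁ ⊆ K := by
    intro t ht
    have h2 : τ - δ' ≤ A := le_max_right _ _
    exact ⟨by rcases ht with ⟨u1, u2⟩; linarith, by rcases ht with ⟨u1, u2⟩; linarith⟩
  have hsubIoc : Icc A T₁ ⊆ Ioc (0:ℝ) 1 :=
    fun t ht => ⟨lt_of_lt_of_le hApos ht.1, ht.2.trans hT₁Ioc.2⟩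
  -- the chart representation claim
  have claim : ∀ θ, θ ∈ Metric.ball θ₀ η → μ θ T₁ ∈ e.source →
      EqOn (μ θ) (fun t => e.symm (gm θ t)) (Icc A T₁) := by
    intro θ hθb hθsrc
    have htarget : ∀ t ∈ Icc A T₁, gm θ t ∈ e.target := by
      intro t ht
      have hx : ((θ, t) : ℝ × ℝ) ∈ U ×ˢ V := ⟨hηU hθb, hKV (hsubK ht)⟩
      have hx2 := hUV hx
      simp only [mem_setOf_eq] at hx2
      exact hx2
    have hνc : ContinuousOn (fun t => e.symm (gm θ t)) (Icc A T₁) :=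
      e.continuousOn_symm.comp ((continuous_gm1 θ).continuousOn) htarget
    have hcomp : ∀ t ∈ Icc A T₁, f (μ θ t) = f (e.symm (gm θ t)) := by
      intro t ht
      rw [hμf θ t (hsubIoc ht), hfe, e.right_inv (htarget t ht)]
    have hagr : μ θ T₁ = e.symm (gm θ T₁) := by
      rw [← hμf θ T₁ hT₁Ioc, hfe]
      exact (e.left_inv hθsrc).symm
    exact lift_unique hf isPreconnected_Icc ((hμc θ).mono hsubIoc) hνc hcomp
      ⟨hAT₁, le_rfl⟩ hagr
  have hθ₀ball : θ₀ ∈ Metric.ball θ₀ η := Metric.mem_ball_self hηpos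
  have hθ₀src : μ θ₀ T₁ ∈ e.source := by
    apply hUosub
    refine ⟨hball₂ ?_, hT₁Ioc⟩
    rw [Real.ball_eq_Ioo]
    constructor
    · linarith
    · linarith
  have heqθ₀ := claim θ₀ hθ₀ball hθ₀src
  have hev1 : ∀ᶠ θ in 𝓝 θ₀, θ ∈ Metric.ball θ₀ η :=
    eventually_of_mem (Metric.ball_mem_nhds θ₀ hηpos) (fun θ h => h)
  have hev2 : ∀ᶠ θ in 𝓝 θ₀, μ θ T₁ ∈ e.source := by
    have htd : Tendsto (fun θ => μ θ T₁) (𝓝 θ₀) (𝓝 (μ θ₀ T₁)) :=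
      hT₁S.2 T₁ ⟨le_rfl, hT₁S.1.2⟩
    exact htd.eventually_mem (e.open_source.mem_nhds hθ₀src)
  have hAS : A ∈ S := by
    refine ⟨⟨le_max_left _ _, hAτ.trans hτmem.2⟩, ?_⟩
    intro t ht
    by_cases htT : t ≤ T₁
    · have hteq : μ θ₀ t = e.symm (gm θ₀ t) := heqθ₀ ⟨ht.1, htT⟩
      have htarget : gm θ₀ t ∈ e.target := by
        have hx : ((θ₀, t) : ℝ × ℝ) ∈ U ×ˢ V := ⟨hηU hθ₀ball, hKV (hsubK ⟨ht.1, htT⟩)⟩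
        have hx2 := hUV hx
        simp only [mem_setOf_eq] at hx2
        exact hx2
      have h5 : ContinuousAt (e.symm) (gm θ₀ t) :=
        e.symm.continuousAt (by rw [OpenPartialHomeomorph.symm_source]; exact htarget)
      have hcont : Tendsto (fun θ => e.symm (gm θ t)) (𝓝 θ₀) (𝓝 (e.symm (gm θ₀ t))) := by
        have h6 : ContinuousAt (fun θ => gm θ t) θ₀ := (continuous_gm2 t).continuousAt
        have h7 := ContinuousAt.comp (x := θ₀)
          (g := (e.symm : TwistedSphere → Z)) (f := fun θ => gm θ t) h5 h6
        exact h7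
      rw [hteq]
      refine Tendsto.congr' ?_ hcont
      filter_upwards [hev1, hev2] with θ h1 h2
      exact (claim θ h1 h2 ⟨ht.1, htT⟩).symm
    · exact hT₁S.2 t ⟨(not_le.mp htT).le, ht.2⟩
  have hτleA : τ ≤ A := csInf_le hSbdd hAS
  rcases max_cases t₀ (τ - δ') with ⟨h1, h2⟩ | ⟨h1, h2⟩
  · rw [← hA] at h1
    exact hAS.2 t₀ ⟨h1.le, ht₀.2⟩
  · exfalso
    rw [← hA] at h1
    rw [h1] at hτleA
    linarith

end Lifts

end Stmt12

open Complex Topology Filter Set Real Stmt12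

/-- there is no surjective local homeomorphism from a compact Hausdorff
space onto the twisted sphere: if `Z` is compact Hausdorff and `f : Z → X` is a local
homeomorphism, then `f` is not surjective. -/
theorem stmt_12 (Z : Type*) [TopologicalSpace Z] [CompactSpace Z] [T2Space Z]
    (f : Z → TwistedSphere) (hf : IsLocalHomeomorph f) :
    ¬ Function.Surjective f := by
  intro hsurj
  obtain ⟨yhat, hy⟩ := hsurj (gm 0 1)
  choose μ hμc hμ1 hμf using fun θ : ℝ => exists_lift hf hy θ
  choose ψ hψor e t₁ hfe ht₁pos ht₁le hwin heqn using
    fun θ : ℝ => lim_structure hf θ (hμc θ) (hμf θ)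
  -- basic limit facts
  have hwin0 : ∀ θ, gm (ψ θ) 0 ∈ (e θ).target := fun θ => hwin θ 0 ⟨le_rfl, (ht₁pos θ).le⟩
  have htend : ∀ θ, Tendsto (μ θ) (𝓝[>] (0:ℝ)) (𝓝 ((e θ).symm (gm (ψ θ) 0))) := by
    intro θ
    have hIocmem : Ioc (0:ℝ) (t₁ θ) ∈ 𝓝[>] (0:ℝ) := Ioc_mem_nhdsGT_of_mem ⟨le_rfl, ht₁pos θ⟩
    have h5 : ContinuousAt ((e θ).symm) (gm (ψ θ) 0) :=
      (e θ).symm.continuousAt (by rw [OpenPartialHomeomorph.symm_source]; exact hwin0 θ)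
    have h6 : ContinuousAt (fun t => gm (ψ θ) t) 0 := (continuous_gm1 (ψ θ)).continuousAt
    have h7' := ContinuousAt.comp (x := (0:ℝ))
      (g := ((e θ).symm : TwistedSphere → Z)) (f := fun t => gm (ψ θ) t) h5 h6
    have h7 : Tendsto (fun t => (e θ).symm (gm (ψ θ) t)) (𝓝[>] (0:ℝ))
        (𝓝 ((e θ).symm (gm (ψ θ) 0))) := h7'.tendsto.mono_left nhdsWithin_le_nhds
    refine Tendsto.congr' ?_ h7
    filter_upwards [hIocmem] with t ht
    exact (heqn θ t ht).symm
  have hflim : ∀ θ, f ((e θ).symm (gm (ψ θ) 0)) = gm (ψ θ) 0 := by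
    intro θ
    rw [hfe θ]
    exact (e θ).right_inv (hwin0 θ)
  -- the flip identity
  have hflip : ∀ θ : ℝ, Complex.exp (↑(ψ (θ + π)) * Complex.I)
      = Complex.exp (↑(ψ θ) * Complex.I) := by
    intro θ
    have heqμ : EqOn (μ (θ + π)) (μ θ) (Ioc 0 1) := by
      refine lift_unique hf isPreconnected_Ioc (hμc _) (hμc _) ?_
        (show (1:ℝ) ∈ Ioc 0 1 from ⟨one_pos, le_rfl⟩) (by rw [hμ1, hμ1])
      intro t ht
      rw [hμf _ t ht, hμf _ t ht, gm_pi θ ht.1]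
    have h2 : Tendsto (μ θ) (𝓝[>] (0:ℝ)) (𝓝 ((e (θ+π)).symm (gm (ψ (θ+π)) 0))) := by
      refine Tendsto.congr' ?_ (htend (θ+π))
      filter_upwards [Ioc_mem_nhdsGT_of_mem (show (0:ℝ) ∈ Ico (0:ℝ) 1 from ⟨le_rfl, one_pos⟩)]
        with t ht
      exact heqμ ht
    have h3 := tendsto_nhds_unique h2 (htend θ)
    have h4 := congrArg f h3
    rw [hflim, hflim] at h4
    exact equator_exp_inj h4
  -- the sign function
  set ε : ℝ → ℂ := fun θ => Complex.exp (↑(ψ θ) * Complex.I) / Complex.exp (↑θ * Complex.I)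
    with hε
  have hεshift : ∀ x d : ℝ, Complex.exp (↑(x + d) * Complex.I) / Complex.exp (↑x * Complex.I)
      = Complex.exp (↑d * Complex.I) := by
    intro x d
    push_cast
    rw [add_mul, Complex.exp_add, mul_comm, mul_div_assoc, div_self (Complex.exp_ne_zero _),
      mul_one]
  have hεval : ∀ θ, ε θ = 1 ∨ ε θ = -1 := by
    intro θ
    rcases hψor θ with h | h
    · left
      simp only [hε]
      rw [h, div_self (Complex.exp_ne_zero _)]
    · right
      simp only [hε]
      rw [h, exp_add_pi θ, neg_div, div_self (Complex.exp_ne_zero _)]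
  have hεflip : ∀ θ, ε (θ + π) = - ε θ := by
    intro θ
    simp only [hε]
    rw [hflip θ, exp_add_pi θ, div_neg]
  -- local constancy of ε
  have hloc : ∀ θ₀, ∀ᶠ θ in 𝓝 θ₀, ε θ = ε θ₀ := by
    intro θ₀
    set d := ψ θ₀ - θ₀ with hd
    have hψd : ψ θ₀ = θ₀ + d := by rw [hd]; ring
    have hco : Continuous fun q : ℝ × ℝ => gm (q.1 + d) q.2 := by
      have h := continuous_gm.comp
        (show Continuous fun q : ℝ × ℝ => ((q.1 + d, q.2) : ℝ × ℝ) from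
          (continuous_fst.add continuous_const).prodMk continuous_snd)
      exact h
    have hWo : IsOpen {q : ℝ × ℝ | gm (q.1 + d) q.2 ∈ (e θ₀).target} :=
      (e θ₀).open_target.preimage hco
    have hKW : ({θ₀} ×ˢ Icc (0:ℝ) (t₁ θ₀)) ⊆ {q : ℝ × ℝ | gm (q.1 + d) q.2 ∈ (e θ₀).target} := by
      rintro ⟨θ, t⟩ ⟨hθ, ht⟩
      rw [mem_singleton_iff] at hθ
      simp only [mem_setOf_eq]
      have hθ' : θ = θ₀ := hθ
      have ht' : t ∈ Icc (0:ℝ) (t₁ θ₀) := ht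
      rw [hθ', ← hψd]
      exact hwin θ₀ t ht'
    obtain ⟨U, V, hUopen, hVopen, hθ₀U, hKV, hUV⟩ :=
      generalized_tube_lemma isCompact_singleton isCompact_Icc hWo hKW
    obtain ⟨η, hηpos, hηU⟩ := Metric.mem_nhds_iff.mp (hUopen.mem_nhds (hθ₀U rfl))
    have hsrcθ₀ : μ θ₀ (t₁ θ₀) ∈ (e θ₀).source := by
      rw [heqn θ₀ (t₁ θ₀) ⟨ht₁pos θ₀, le_rfl⟩]
      exact (e θ₀).map_target (hwin θ₀ (t₁ θ₀) ⟨(ht₁pos θ₀).le, le_rfl⟩)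
    have hev2 : ∀ᶠ θ in 𝓝 θ₀, μ θ (t₁ θ₀) ∈ (e θ₀).source :=
      (cont_param hf hμc hμ1 hμf θ₀ ⟨ht₁pos θ₀, ht₁le θ₀⟩).eventually_mem
        ((e θ₀).open_source.mem_nhds hsrcθ₀)
    have hev1 : ∀ᶠ θ in 𝓝 θ₀, θ ∈ Metric.ball θ₀ η :=
      eventually_of_mem (Metric.ball_mem_nhds θ₀ hηpos) (fun θ h => h)
    filter_upwards [hev1, hev2] with θ h1 h2
    have htargetθ : ∀ t ∈ Icc (0:ℝ) (t₁ θ₀), gm (θ + d) t ∈ (e θ₀).target := by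
      intro t ht
      have hx : ((θ, t) : ℝ × ℝ) ∈ U ×ˢ V := ⟨hηU h1, hKV ht⟩
      have hx2 := hUV hx
      simp only [mem_setOf_eq] at hx2
      exact hx2
    have hgm_eq : ∀ t : ℝ, 0 < t → gm (θ + d) t = gm θ t := by
      intro t ht
      rcases hψor θ₀ with h' | h'
      · have hdz : d = 0 := by rw [hd, h']; ring
        rw [hdz, add_zero]
      · have hdz : d = π := by rw [hd, h']; ring
        rw [hdz]
        exact gm_pi θ ht
    have hsub1 : Ioc (0:ℝ) (t₁ θ₀) ⊆ Ioc (0:ℝ) 1 := Ioc_subset_Ioc_right (ht₁le θ₀)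
    have heq2 : EqOn (μ θ) (fun t => (e θ₀).symm (gm (θ + d) t)) (Ioc 0 (t₁ θ₀)) := by
      refine lift_unique hf isPreconnected_Ioc ((hμc θ).mono hsub1)
        ((e θ₀).continuousOn_symm.comp ((continuous_gm1 (θ + d)).continuousOn)
          (fun t ht => htargetθ t ⟨ht.1.le, ht.2⟩)) ?_
        (show t₁ θ₀ ∈ Ioc (0:ℝ) (t₁ θ₀) from ⟨ht₁pos θ₀, le_rfl⟩) ?_
      · intro t ht
        rw [hμf θ t (hsub1 ht), hfe θ₀, (e θ₀).right_inv (htargetθ t ⟨ht.1.le, ht.2⟩),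
          hgm_eq t ht.1]
      · have ha1 : gm (θ + d) (t₁ θ₀) = f (μ θ (t₁ θ₀)) := by
          rw [hμf θ (t₁ θ₀) (hsub1 ⟨ht₁pos θ₀, le_rfl⟩), hgm_eq (t₁ θ₀) (ht₁pos θ₀)]
        show μ θ (t₁ θ₀) = (e θ₀).symm (gm (θ + d) (t₁ θ₀))
        rw [ha1, hfe θ₀]
        exact ((e θ₀).left_inv h2).symm
    have h8 : Tendsto (μ θ) (𝓝[>] (0:ℝ)) (𝓝 ((e θ₀).symm (gm (θ + d) 0))) := by
      have h5 : ContinuousAt ((e θ₀).symm) (gm (θ + d) 0) :=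
        (e θ₀).symm.continuousAt
          (by rw [OpenPartialHomeomorph.symm_source]
              exact htargetθ 0 ⟨le_rfl, (ht₁pos θ₀).le⟩)
      have h6 : ContinuousAt (fun t => gm (θ + d) t) 0 := (continuous_gm1 (θ + d)).continuousAt
      have h7' := ContinuousAt.comp (x := (0:ℝ))
        (g := ((e θ₀).symm : TwistedSphere → Z)) (f := fun t => gm (θ + d) t) h5 h6
      have h7 : Tendsto (fun t => (e θ₀).symm (gm (θ + d) t)) (𝓝[>] (0:ℝ))
          (𝓝 ((e θ₀).symm (gm (θ + d) 0))) := h7'.tendsto.mono_left nhdsWithin_le_nhds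
      refine Tendsto.congr' ?_ h7
      filter_upwards [Ioc_mem_nhdsGT_of_mem
        (show (0:ℝ) ∈ Ico (0:ℝ) (t₁ θ₀) from ⟨le_rfl, ht₁pos θ₀⟩)] with t ht
      exact (heq2 ht).symm
    have h9 := tendsto_nhds_unique h8 (htend θ)
    have h10 : gm (θ + d) 0 = gm (ψ θ) 0 := by
      have h9' := congrArg f h9
      rw [hflim θ] at h9'
      rw [← h9']
      rw [hfe θ₀]
      exact ((e θ₀).right_inv (htargetθ 0 ⟨le_rfl, (ht₁pos θ₀).le⟩)).symm
    have h11 := equator_exp_inj h10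
    simp only [hε]
    rw [← h11, hψd, hεshift, hεshift]
  -- clopen argument
  have hopen1 : IsOpen {θ : ℝ | ε θ = 1} := by
    rw [isOpen_iff_mem_nhds]
    intro θ₀ hθ₀
    have h := hloc θ₀
    rw [mem_setOf_eq] at hθ₀
    filter_upwards [h] with θ hθ
    exact hθ.trans hθ₀
  have hopen2 : IsOpen {θ : ℝ | ε θ = -1} := by
    rw [isOpen_iff_mem_nhds]
    intro θ₀ hθ₀
    have h := hloc θ₀
    rw [mem_setOf_eq] at hθ₀
    filter_upwards [h] with θ hθ
    exact hθ.trans hθ₀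
  have hcompl : {θ : ℝ | ε θ = 1}ᶜ = {θ : ℝ | ε θ = -1} := by
    ext θ
    simp only [mem_compl_iff, mem_setOf_eq]
    constructor
    · intro h
      exact (hεval θ).resolve_left h
    · intro h hc
      rw [h] at hc
      norm_num at hc
  have hclopen : IsClopen {θ : ℝ | ε θ = 1} :=
    ⟨by rw [← isOpen_compl_iff, hcompl]; exact hopen2, hopen1⟩
  rcases isClopen_iff.mp hclopen with h | h
  · have h0 : ε 0 = -1 := by
      rcases hεval 0 with h' | h'
      · exfalso
        have : (0:ℝ) ∈ {θ : ℝ | ε θ = 1} := h'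
        rw [h] at this
        exact this
      · exact h'
    have hπ : ε (0 + π) = 1 := by rw [hεflip 0, h0]; norm_num
    have : (0 + π : ℝ) ∈ {θ : ℝ | ε θ = 1} := hπ
    rw [h] at this
    exact this
  · have h0 : ε 0 = 1 := by
      have : (0:ℝ) ∈ {θ : ℝ | ε θ = 1} := by rw [h]; exact mem_univ _
      exact this
    have hπ : ε (0 + π) = 1 := by
      have : (0 + π : ℝ) ∈ {θ : ℝ | ε θ = 1} := by rw [h]; exact mem_univ _
      exact this
    rw [hεflip 0, h0] at hπ
    norm_num at hπ
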